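/- Every entanglement-breaking subspace V ⊆ ℂ^m ⊗ ℂ^n has dimension at most n. -/

import Mathlib

open scoped BigOperators ComplexOrder
open Kronecker

noncomputable section

/-- The `j`-th standard basis vector of `ℂ^q` (zero if `j ≥ q`). -/
def ee (q : ℕ) (j : ℕ) : Fin q → ℂ := fun b => if (b : ℕ) = j then 1 else 0

/-- Tensor (Kronecker) product of two vectors. -/
def tens {A B : Type*} (x : A → ℂ) (y : B → ℂ) : A × B → ℂ := fun p => x p.1 * y p.2

/-- A matrix on `ℂ^A ⊗ ℂ^B` is separable if it is a finite sum of Kronecker products of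
rank-one positive semidefinite matrices. -/
def IsSep {A B : Type*} (ρ : Matrix (A × B) (A × B) ℂ) : Prop :=
  ∃ (T : ℕ) (x : Fin T → A → ℂ) (y : Fin T → B → ℂ),
    ρ = ∑ t : Fin T, Matrix.of (fun p q : A × B =>
      (x t p.1 * (starRingEnd ℂ) (x t q.1)) * (y t p.2 * (starRingEnd ℂ) (y t q.2)))

/-- Partial trace over the middle (B) system of the rank-one projection `|Ψ⟩⟨Ψ|`. -/
def TrB {A B : Type*} [Fintype B] {k : ℕ} (Ψ : A × B × Fin k → ℂ) :
    Matrix (A × Fin k) (A × Fin k) ℂ :=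
  Matrix.of fun p q => ∑ b : B, Ψ (p.1, b, p.2) * (starRingEnd ℂ) (Ψ (q.1, b, q.2))

/-- A subspace `V ⊆ ℂ^A ⊗ ℂ^B` is entanglement breaking if for every ancilla dimension
`k ≥ 1` and every `Ψ` whose slices all lie in `V`, the matrix `Tr_B |Ψ⟩⟨Ψ|` is separable. -/
def IsEBSpace {A B : Type*} [Fintype B] (V : Submodule ℂ (A × B → ℂ)) : Prop :=
  ∀ (k : ℕ), 1 ≤ k → ∀ Ψ : A × B × Fin k → ℂ,
    (∀ ℓ : Fin k, (fun ab : A × B => Ψ (ab.1, ab.2, ℓ)) ∈ V) → IsSep (TrB Ψ)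

/-- Partial transpose on the B system. -/
def PT {A B : Type*} (ρ : Matrix (A × B) (A × B) ℂ) : Matrix (A × B) (A × B) ℂ :=
  Matrix.of fun p q => ρ (p.1, q.2) (q.1, p.2)

/-- Partial trace over the B system of a matrix. -/
def trBmat {A B : Type*} [Fintype B] (ρ : Matrix (A × B) (A × B) ℂ) : Matrix A A ℂ :=
  Matrix.of fun a a' => ∑ b : B, ρ (a, b) (a', b)

/-- Partial trace over the A system of a matrix. -/
def trAmat {A B : Type*} [Fintype A] (ρ : Matrix (A × B) (A × B) ℂ) : Matrix B B ℂ :=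
  Matrix.of fun b b' => ∑ a : A, ρ (a, b) (a, b')
local notation "conj'" => starRingEnd ℂ

lemma sum_conj_mul_self_eq_zero {ι : Type*} (s : Finset ι) (g : ι → ℂ)
    (h : ∑ i ∈ s, conj' (g i) * g i = 0) : ∀ i ∈ s, g i = 0 := by
  have h' : ∑ i ∈ s, Complex.normSq (g i) = 0 := by
    have h2 := congrArg Complex.re h
    simpa [Complex.normSq_eq_conj_mul_self, Complex.re_sum, Complex.normSq_apply] using h2
  intro i hi
  have h3 := (Finset.sum_eq_zero_iff_of_nonneg
    (fun i _ => Complex.normSq_nonneg (g i))).mp h' i hi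
  exact Complex.normSq_eq_zero.mp h3

lemma quad_split {P : Type*} [Fintype P] (u z : P → ℂ) :
    ∑ p : P, ∑ q : P, (conj' (u p) * u q) * (z p * conj' (z q))
      = conj' (∑ p, conj' (u p) * z p) * (∑ p, conj' (u p) * z p) := by
  calc ∑ p : P, ∑ q : P, (conj' (u p) * u q) * (z p * conj' (z q))
      = ∑ p : P, (conj' (u p) * z p) * ∑ q : P, (u q * conj' (z q)) := by
        refine Finset.sum_congr rfl fun p _ => ?_
        rw [Finset.mul_sum]
        exact Finset.sum_congr rfl fun q _ => by ring
    _ = (∑ p, conj' (u p) * z p) * ∑ q : P, (u q * conj' (z q)) := by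
        rw [Finset.sum_mul]
    _ = conj' (∑ p, conj' (u p) * z p) * (∑ p, conj' (u p) * z p) := by
        rw [mul_comm]; congr 1
        rw [map_sum]
        exact Finset.sum_congr rfl fun p _ => by simp [map_mul]

lemma quad_sum {P ι : Type*} [Fintype P] [Fintype ι] (u : P → ℂ) (z : ι → P → ℂ) :
    ∑ p : P, ∑ q : P, (conj' (u p) * u q) * (∑ i, z i p * conj' (z i q))
      = ∑ i, conj' (∑ p, conj' (u p) * z i p) * (∑ p, conj' (u p) * z i p) := by
  calc ∑ p : P, ∑ q : P, (conj' (u p) * u q) * (∑ i, z i p * conj' (z i q))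
      = ∑ p : P, ∑ i, ∑ q : P, (conj' (u p) * u q) * (z i p * conj' (z i q)) := by
        refine Finset.sum_congr rfl fun p _ => ?_
        rw [Finset.sum_comm]
        exact Finset.sum_congr rfl fun q _ => Finset.mul_sum _ _ _
    _ = ∑ i, ∑ p : P, ∑ q : P, (conj' (u p) * u q) * (z i p * conj' (z i q)) :=
        Finset.sum_comm
    _ = ∑ i, conj' (∑ p, conj' (u p) * z i p) * (∑ p, conj' (u p) * z i p) :=
        Finset.sum_congr rfl fun i _ => quad_split u (z i)

lemma tens_li {A B ι : Type*} (x : ι → A → ℂ) (y : ι → B → ℂ)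
    (hx : ∀ i, x i ≠ 0) (hy : LinearIndependent ℂ y) :
    LinearIndependent ℂ (fun i => tens (x i) (y i)) := by
  rw [linearIndependent_iff']
  intro s g hg i hi
  obtain ⟨a, ha⟩ : ∃ a, x i a ≠ 0 := by
    by_contra hc; push_neg at hc; exact hx i (funext hc)
  have h2 : ∑ j ∈ s, (g j * x j a) • y j = 0 := by
    funext b
    have h3 := congrFun hg (a, b)
    simp only [Finset.sum_apply, Pi.smul_apply, tens, smul_eq_mul, Pi.zero_apply] at h3 ⊢
    rw [← h3]
    exact Finset.sum_congr rfl fun j _ => by ring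
  have h4 := linearIndependent_iff'.mp hy s (fun j => g j * x j a) h2 i hi
  exact (mul_eq_zero.mp h4).resolve_right ha

/-- Every EB subspace of `ℂ^m ⊗ ℂ^n` has dimension at most `n`. -/
theorem eb_dim_le {m n : ℕ} (V : Submodule ℂ (Fin m × Fin n → ℂ))
    (hV : IsEBSpace V) : Module.finrank ℂ V ≤ n := by
  set k := Module.finrank ℂ V with hkdef
  rcases Nat.eq_zero_or_pos k with h0 | hpos
  · omega
  let bV := Module.finBasis ℂ V
  let v : Fin k → (Fin m × Fin n → ℂ) := fun ℓ => (bV ℓ : Fin m × Fin n → ℂ)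
  have hv_li : LinearIndependent ℂ v :=
    bV.linearIndependent.map' V.subtype (Submodule.ker_subtype V)
  let Ψ : Fin m × Fin n × Fin k → ℂ := fun p => v p.2.2 (p.1, p.2.1)
  have hmem : ∀ ℓ : Fin k, (fun ab : Fin m × Fin n => Ψ (ab.1, ab.2, ℓ)) ∈ V :=
    fun ℓ => (bV ℓ).2
  obtain ⟨T, x, y, hsum⟩ := hV k hpos Ψ hmem
  -- the columns w b, living on ℂ^(m k)
  let w : Fin n → (Fin m × Fin k → ℂ) := fun b p => v p.2 (p.1, b)
  have hTrB : ∀ p q : Fin m × Fin k,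
      (∑ b, w b p * conj' (w b q))
        = ∑ t, (x t p.1 * conj' (x t q.1)) * (y t p.2 * conj' (y t q.2)) := by
    intro p q
    have h1 := congrFun (congrFun hsum (p.1, p.2)) (q.1, q.2)
    simpa [TrB, Matrix.sum_apply, Matrix.of_apply] using h1
  -- the Gram-like matrix
  let c : Fin T → ℂ := fun t => ∑ a, x t a * conj' (x t a)
  let G : Matrix (Fin k) (Fin k) ℂ := fun ℓ ℓ' => ∑ t, c t * (y t ℓ * conj' (y t ℓ'))
  have hGv : ∀ ℓ ℓ', G ℓ ℓ' = ∑ p : Fin m × Fin n, v ℓ p * conj' (v ℓ' p) := by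
    intro ℓ ℓ'
    calc G ℓ ℓ' = ∑ t, ∑ a, (x t a * conj' (x t a)) * (y t ℓ * conj' (y t ℓ')) := by
          exact Finset.sum_congr rfl fun t _ => Finset.sum_mul _ _ _
      _ = ∑ a, ∑ t, (x t a * conj' (x t a)) * (y t ℓ * conj' (y t ℓ')) := Finset.sum_comm
      _ = ∑ a, ∑ b, v ℓ (a, b) * conj' (v ℓ' (a, b)) :=
          Finset.sum_congr rfl fun a _ => (hTrB (a, ℓ) (a, ℓ')).symm
      _ = ∑ p : Fin m × Fin n, v ℓ p * conj' (v ℓ' p) := by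
          rw [Fintype.sum_prod_type]
  have hGinj : Function.Injective G.mulVecLin := by
    rw [← LinearMap.ker_eq_bot, Submodule.eq_bot_iff]
    intro u hu
    have hu' : G.mulVec u = 0 := hu
    have hkey : ∑ p : Fin m × Fin n,
        conj' (∑ ℓ, conj' (u ℓ) * v ℓ p) * (∑ ℓ, conj' (u ℓ) * v ℓ p) = 0 := by
      have e1 : ∀ p : Fin m × Fin n,
          conj' (∑ ℓ, conj' (u ℓ) * v ℓ p) * (∑ ℓ, conj' (u ℓ) * v ℓ p)
            = ∑ ℓ, ∑ ℓ', (u ℓ * conj' (u ℓ')) * (conj' (v ℓ p) * v ℓ' p) := by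
        intro p
        rw [map_sum, Finset.sum_mul_sum]
        refine Finset.sum_congr rfl fun ℓ _ => Finset.sum_congr rfl fun ℓ' _ => ?_
        simp only [map_mul, RingHomCompTriple.comp_apply, RingHom.id_apply, Complex.conj_conj]
        ring
      calc ∑ p : Fin m × Fin n,
            conj' (∑ ℓ, conj' (u ℓ) * v ℓ p) * (∑ ℓ, conj' (u ℓ) * v ℓ p)
          = ∑ p : Fin m × Fin n, ∑ ℓ, ∑ ℓ', (u ℓ * conj' (u ℓ')) * (conj' (v ℓ p) * v ℓ' p) :=
            Finset.sum_congr rfl fun p _ => e1 p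
        _ = ∑ ℓ, ∑ p : Fin m × Fin n, ∑ ℓ', (u ℓ * conj' (u ℓ')) * (conj' (v ℓ p) * v ℓ' p) :=
            Finset.sum_comm
        _ = ∑ ℓ, ∑ ℓ', ∑ p : Fin m × Fin n, (u ℓ * conj' (u ℓ')) * (conj' (v ℓ p) * v ℓ' p) :=
            Finset.sum_congr rfl fun ℓ _ => Finset.sum_comm
        _ = ∑ ℓ, u ℓ * conj' (G.mulVec u ℓ) := by
            refine Finset.sum_congr rfl fun ℓ _ => ?_
            have : conj' (G.mulVec u ℓ) = ∑ ℓ', conj' (u ℓ') * (∑ p, conj' (v ℓ p) * v ℓ' p) := by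
              simp only [Matrix.mulVec, dotProduct, map_sum, map_mul]
              refine Finset.sum_congr rfl fun ℓ' _ => ?_
              rw [hGv ℓ ℓ', map_sum]
              simp only [map_mul, Complex.conj_conj]
              ring
            rw [this, Finset.mul_sum]
            refine Finset.sum_congr rfl fun ℓ' _ => ?_
            rw [← Finset.mul_sum]
            ring
        _ = 0 := by rw [hu']; simp
    have hz := sum_conj_mul_self_eq_zero Finset.univ _ hkey
    have hcomb : ∑ ℓ, conj' (u ℓ) • v ℓ = 0 := by
      funext p
      simpa [Finset.sum_apply] using hz p (Finset.mem_univ p)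
    have hall := Fintype.linearIndependent_iff.mp hv_li (fun ℓ => conj' (u ℓ)) hcomb
    funext ℓ
    simpa using hall ℓ
  have hGsurj : Function.Surjective G.mulVecLin :=
    (LinearMap.injective_iff_surjective).mp hGinj
  -- the (nonzero-weight) y's span everything
  let S : Set (Fin k → ℂ) := y '' {t | c t ≠ 0}
  have hspan : ∀ u : Fin k → ℂ, u ∈ Submodule.span ℂ S := by
    intro u
    obtain ⟨wv, hwv⟩ := hGsurj u
    have hu : u = ∑ t, (c t * ∑ ℓ', conj' (y t ℓ') * wv ℓ') • y t := by
      funext ℓ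
      have h1 : u ℓ = ∑ ℓ', G ℓ ℓ' * wv ℓ' := by
        rw [← hwv]; rfl
      rw [h1]
      have h2 : ∀ ℓ', G ℓ ℓ' * wv ℓ' = ∑ t, (c t * (y t ℓ * conj' (y t ℓ'))) * wv ℓ' :=
        fun ℓ' => Finset.sum_mul _ _ _
      calc ∑ ℓ', G ℓ ℓ' * wv ℓ'
          = ∑ ℓ', ∑ t, (c t * (y t ℓ * conj' (y t ℓ'))) * wv ℓ' :=
            Finset.sum_congr rfl fun ℓ' _ => h2 ℓ'
        _ = ∑ t, ∑ ℓ', (c t * (y t ℓ * conj' (y t ℓ'))) * wv ℓ' := Finset.sum_comm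
        _ = ∑ t, (c t * ∑ ℓ', conj' (y t ℓ') * wv ℓ') * y t ℓ := by
            refine Finset.sum_congr rfl fun t _ => ?_
            rw [Finset.mul_sum, Finset.sum_mul]
            exact Finset.sum_congr rfl fun ℓ' _ => by ring
        _ = (∑ t, (c t * ∑ ℓ', conj' (y t ℓ') * wv ℓ') • y t) ℓ := by
            simp [Finset.sum_apply]
    rw [hu]
    refine Submodule.sum_mem _ fun t _ => ?_
    by_cases hct : c t = 0
    · rw [hct, zero_mul, zero_smul]; exact Submodule.zero_mem _
    · exact Submodule.smul_mem _ _ (Submodule.subset_span ⟨t, hct, rfl⟩)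
  obtain ⟨bs, hbsS, hspanbs, hbli⟩ := exists_linearIndependent ℂ S
  have hbs_top : Submodule.span ℂ bs = ⊤ := by
    rw [hspanbs]
    exact top_unique fun u _ => hspan u
  have hfin : bs.Finite := hbli.setFinite
  haveI := hfin.fintype
  have hcard : Fintype.card bs = k := by
    have h1 := finrank_span_set_eq_card hbli
    rw [hbs_top, finrank_top, Module.finrank_pi, Set.toFinset_card] at h1
    simpa using h1.symm
  have hchoice : ∀ e : bs, ∃ t, c t ≠ 0 ∧ y t = (e : Fin k → ℂ) := by
    intro e
    obtain ⟨t, ht1, ht2⟩ := hbsS e.2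
    exact ⟨t, ht1, ht2⟩
  choose tf htf1 htf2 using hchoice
  -- move to Euclidean space to use orthogonality
  let le2 : (Fin m × Fin k → ℂ) ≃ₗ[ℂ] EuclideanSpace ℂ (Fin m × Fin k) :=
    (WithLp.linearEquiv 2 ℂ (Fin m × Fin k → ℂ)).symm
  let W : Submodule ℂ (EuclideanSpace ℂ (Fin m × Fin k)) :=
    Submodule.span ℂ (Set.range fun b => le2 (w b))
  have hip : ∀ (u : EuclideanSpace ℂ (Fin m × Fin k)) (z : Fin m × Fin k → ℂ),
      (inner ℂ u (le2 z) : ℂ) = ∑ p, conj' (u p) * z p := by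
    intro u z
    rw [PiLp.inner_apply]
    exact Finset.sum_congr rfl fun p _ => by rw [RCLike.inner_apply']; rfl
  have hzW : ∀ t, le2 (tens (x t) (y t)) ∈ W := by
    intro t
    rw [← Submodule.orthogonal_orthogonal W, Submodule.mem_orthogonal]
    intro u hu
    have hub : ∀ b, ∑ p, conj' (u p) * w b p = 0 := by
      intro b
      rw [← hip u (w b)]
      exact (Submodule.mem_orthogonal' W u).mp hu _ (Submodule.subset_span ⟨b, rfl⟩)
    have hquad : ∑ t' : Fin T,
        conj' (∑ p, conj' (u p) * tens (x t') (y t') p)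
          * (∑ p, conj' (u p) * tens (x t') (y t') p) = 0 := by
      calc ∑ t' : Fin T, conj' (∑ p, conj' (u p) * tens (x t') (y t') p)
              * (∑ p, conj' (u p) * tens (x t') (y t') p)
          = ∑ p : Fin m × Fin k, ∑ q : Fin m × Fin k, (conj' (u p) * u q)
              * (∑ t', tens (x t') (y t') p * conj' (tens (x t') (y t') q)) :=
            (quad_sum u _).symm
        _ = ∑ p : Fin m × Fin k, ∑ q : Fin m × Fin k, (conj' (u p) * u q)
              * (∑ b, w b p * conj' (w b q)) := by
            refine Finset.sum_congr rfl fun p _ => Finset.sum_congr rfl fun q _ => ?_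
            congr 1
            rw [hTrB p q]
            refine Finset.sum_congr rfl fun t' _ => ?_
            simp only [tens, map_mul]
            ring
        _ = ∑ b, conj' (∑ p, conj' (u p) * w b p) * (∑ p, conj' (u p) * w b p) :=
            quad_sum u w
        _ = 0 := by
            refine Finset.sum_eq_zero fun b _ => ?_
            rw [hub b, mul_zero]
    have h0 := sum_conj_mul_self_eq_zero Finset.univ _ hquad t (Finset.mem_univ t)
    rw [hip]
    exact h0
  -- final counting
  let ζ : bs → EuclideanSpace ℂ (Fin m × Fin k) :=
    fun e => le2 (tens (x (tf e)) (y (tf e)))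
  have hζli : LinearIndependent ℂ ζ := by
    have h1 : LinearIndependent ℂ (fun e : bs => tens (x (tf e)) (y (tf e))) := by
      apply tens_li
      · intro e hxe
        apply htf1 e
        show (∑ a, x (tf e) a * conj' (x (tf e) a)) = 0
        rw [hxe]
        simp
      · have hyy : (fun e : bs => y (tf e)) = (fun e : bs => (e : Fin k → ℂ)) :=
          funext fun e => htf2 e
        rw [hyy]
        exact hbli
    exact h1.map' le2.toLinearMap le2.ker
  have h5 : Submodule.span ℂ (Set.range ζ) ≤ W := by
    rw [Submodule.span_le]
    rintro _ ⟨e, rfl⟩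
    exact hzW (tf e)
  have h6 : Module.finrank ℂ (Submodule.span ℂ (Set.range ζ)) = k := by
    rw [finrank_span_eq_card hζli, hcard]
  have h7 : Module.finrank ℂ W ≤ n := by
    classical
    have h8 := finrank_span_le_card (R := ℂ) (Set.range fun b => le2 (w b))
    refine h8.trans ?_
    rw [Set.toFinset_range]
    exact (Finset.card_image_le).trans (by simp)
  have h9 : Module.finrank ℂ (Submodule.span ℂ (Set.range ζ)) ≤ Module.finrank ℂ W :=
    Submodule.finrank_mono h5
  omega
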